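/- Let n ∈ ℕ, let A be a real n×n matrix, and suppose H is a real symmetric positive definite n×n matrix satisfying A·H + H·Aᵀ + 2I = 0. Then for all t ≥ 0, ‖exp(tA)‖₂² ≤ ‖H‖₂·‖H⁻¹‖₂ · e^{−2t/‖H‖₂}. -/

import Mathlib

open Matrix

/-- The spectral norm (`2`-norm) of a real square matrix: its operator norm as a linear
map between Euclidean (`ℓ²`) spaces. -/
noncomputable def specNorm {n : ℕ} (M : Matrix (Fin n) (Fin n) ℝ) : ℝ :=
  ‖Matrix.toEuclideanCLM (𝕜 := ℝ) M‖

open ContinuousLinearMap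
open scoped RealInnerProductSpace
open scoped MatrixOrder

namespace HuLiuAux

variable {n : ℕ}

lemma real_conjTranspose_eq (M : Matrix (Fin n) (Fin n) ℝ) : Mᴴ = Mᵀ := by
  ext i j; simp [Matrix.conjTranspose_apply]

lemma eCLM_exp (M : Matrix (Fin n) (Fin n) ℝ) :
    Matrix.toEuclideanCLM (𝕜 := ℝ) (NormedSpace.exp M)
      = NormedSpace.exp (Matrix.toEuclideanCLM (𝕜 := ℝ) M) := by
  letI : SeminormedRing (Matrix (Fin n) (Fin n) ℝ) := Matrix.linftyOpSemiNormedRing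
  letI : NormedRing (Matrix (Fin n) (Fin n) ℝ) := Matrix.linftyOpNormedRing
  letI : NormedAlgebra ℝ (Matrix (Fin n) (Fin n) ℝ) := Matrix.linftyOpNormedAlgebra
  letI : NormedAlgebra ℚ (Matrix (Fin n) (Fin n) ℝ) :=
    NormedAlgebra.restrictScalars ℚ ℝ (Matrix (Fin n) (Fin n) ℝ)
  set φ := Matrix.toEuclideanCLM (𝕜 := ℝ) (n := Fin n)
  have hcont : Continuous φ := by
    let ψ : Matrix (Fin n) (Fin n) ℝ →ₗ[ℝ]
        (EuclideanSpace ℝ (Fin n) →L[ℝ] EuclideanSpace ℝ (Fin n)) :=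
      { toFun := φ, map_add' := fun a b => map_add φ a b,
        map_smul' := fun r a => map_smul φ r a }
    exact ψ.continuous_of_finiteDimensional
  exact NormedSpace.map_exp φ hcont M

lemma eCLM_mul (M N : Matrix (Fin n) (Fin n) ℝ) (z : EuclideanSpace ℝ (Fin n)) :
    Matrix.toEuclideanCLM (𝕜 := ℝ) M (Matrix.toEuclideanCLM (𝕜 := ℝ) N z)
      = Matrix.toEuclideanCLM (𝕜 := ℝ) (M * N) z := by
  rw [_root_.map_mul]; rfl

lemma eCLM_sym_inner (M : Matrix (Fin n) (Fin n) ℝ) (hM : Mᵀ = M)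
    (z w : EuclideanSpace ℝ (Fin n)) :
    ⟪Matrix.toEuclideanCLM (𝕜 := ℝ) M z, w⟫ = ⟪z, Matrix.toEuclideanCLM (𝕜 := ℝ) M w⟫ := by
  set φ := Matrix.toEuclideanCLM (𝕜 := ℝ) (n := Fin n)
  have hstar : star M = M := by
    rw [Matrix.star_eq_conjTranspose, real_conjTranspose_eq, hM]
  have hadj : ContinuousLinearMap.adjoint (φ M) = φ M := by
    rw [← ContinuousLinearMap.star_eq_adjoint, ← map_star, hstar]
  nth_rewrite 1 [← hadj]
  exact ContinuousLinearMap.adjoint_inner_left (φ M) w z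

lemma eCLM_transpose_inner (M : Matrix (Fin n) (Fin n) ℝ)
    (z w : EuclideanSpace ℝ (Fin n)) :
    ⟪Matrix.toEuclideanCLM (𝕜 := ℝ) Mᵀ z, w⟫ = ⟪z, Matrix.toEuclideanCLM (𝕜 := ℝ) M w⟫ := by
  set φ := Matrix.toEuclideanCLM (𝕜 := ℝ) (n := Fin n)
  have hadj : ContinuousLinearMap.adjoint (φ M) = φ Mᵀ := by
    rw [← ContinuousLinearMap.star_eq_adjoint, ← map_star, Matrix.star_eq_conjTranspose,
      real_conjTranspose_eq]
  rw [← hadj]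
  exact ContinuousLinearMap.adjoint_inner_left (φ M) w z

end HuLiuAux

open HuLiuAux

set_option maxHeartbeats 1000000 in
set_option synthInstance.maxHeartbeats 200000 in
/-- (Hu–Liu bound) If `H` is real symmetric positive definite with
`A H + H Aᵀ + 2I = 0`, then `‖exp(tA)‖₂² ≤ ‖H‖₂ ‖H⁻¹‖₂ e^{−2t/‖H‖₂}` for all `t ≥ 0`. -/
theorem matrix_exponential_bound_via_lyapunov_certificate (n : ℕ)
    (A H : Matrix (Fin n) (Fin n) ℝ) (hH : H.PosDef)
    (hLyap : A * H + H * Aᵀ + (2 : ℝ) • (1 : Matrix (Fin n) (Fin n) ℝ) = 0) :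
    ∀ t : ℝ, 0 ≤ t →
      specNorm (NormedSpace.exp (t • A)) ^ 2
        ≤ specNorm H * specNorm H⁻¹ * Real.exp (-2 * t / specNorm H) := by
  intro t ht
  rcases Nat.eq_zero_or_pos n with hn | hn
  · subst hn
    haveI : Subsingleton (EuclideanSpace ℝ (Fin 0)) :=
      ⟨fun a b => by ext i; exact Fin.elim0 i⟩
    have h0 : ∀ M : Matrix (Fin 0) (Fin 0) ℝ, specNorm M = 0 := fun M => by
      have hz : (Matrix.toEuclideanCLM (𝕜 := ℝ) M) = 0 :=
        ContinuousLinearMap.ext fun x => Subsingleton.elim _ _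
      rw [specNorm, hz, norm_zero]
    simp [h0]
  haveI : Nonempty (Fin n) := ⟨⟨0, hn⟩⟩
  set φ := Matrix.toEuclideanCLM (𝕜 := ℝ) (n := Fin n) with hφ
  set T := φ A with hT
  set K := φ H⁻¹ with hK
  set cH : ℝ := ‖φ H‖ with hcH
  set cK : ℝ := ‖K‖ with hcK
  -- basic matrix facts
  have hdetH : H.det ≠ 0 := hH.det_pos.ne'
  have h1 : H * H⁻¹ = 1 := Matrix.mul_nonsing_inv H (isUnit_iff_ne_zero.mpr hdetH)
  have h2 : H⁻¹ * H = 1 := Matrix.nonsing_inv_mul H (isUnit_iff_ne_zero.mpr hdetH)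
  have hHsym : Hᵀ = H := by rw [← real_conjTranspose_eq, hH.1]
  have hHisym : (H⁻¹)ᵀ = H⁻¹ := by rw [Matrix.transpose_nonsing_inv, hHsym]
  have hc : 0 < cH := by
    rw [hcH, norm_pos_iff]
    intro hz
    have : H = 0 := φ.injective (hz.trans (_root_.map_zero φ).symm)
    rw [this, Matrix.det_zero] at hdetH
    exact hdetH rfl
  -- square root
  set B := CFC.sqrt H with hB
  have hBB : B * B = H := CFC.sqrt_mul_sqrt_self H hH.posSemidef.nonneg
  have hBsym : Bᵀ = B := by
    rw [← real_conjTranspose_eq, (CFC.sqrt_nonneg H).posSemidef.1]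
  have hdetB : B.det ≠ 0 := by
    intro h
    apply hdetH
    rw [← hBB, Matrix.det_mul, h, mul_zero]
  have hB1 : B * B⁻¹ = 1 := Matrix.mul_nonsing_inv B (isUnit_iff_ne_zero.mpr hdetB)
  have hBHc : B * H⁻¹ = H⁻¹ * B := by
    have hBH : B * H = H * B := by rw [← hBB, mul_assoc]
    calc B * H⁻¹ = H⁻¹ * H * (B * H⁻¹) := by rw [h2, one_mul]
      _ = H⁻¹ * (H * B) * H⁻¹ := by noncomm_ring
      _ = H⁻¹ * (B * H) * H⁻¹ := by rw [hBH]
      _ = H⁻¹ * B * (H * H⁻¹) := by noncomm_ring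
      _ = H⁻¹ * B := by rw [h1, mul_one]
  have hBHB : B * H⁻¹ * B = 1 := by rw [hBHc, mul_assoc, hBB, h2]
  -- the key quadratic-form inequality : ‖w‖² ≤ cH * ⟪K w, w⟫
  have key : ∀ w : EuclideanSpace ℝ (Fin n), ‖w‖ ^ 2 ≤ cH * ⟪K w, w⟫ := by
    intro w
    set v := φ B⁻¹ w with hv
    have hw : φ B v = w := by
      rw [hv, eCLM_mul, hB1, _root_.map_one, ContinuousLinearMap.one_apply]
    have hKw : ⟪K w, w⟫ = ‖v‖ ^ 2 := by
      rw [← hw, hK, ← eCLM_sym_inner B hBsym, eCLM_mul, eCLM_mul, hBHB, _root_.map_one,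
        ContinuousLinearMap.one_apply, real_inner_self_eq_norm_sq]
    have hwn : ‖w‖ ^ 2 = ⟪φ H v, v⟫ := by
      rw [← hw, ← real_inner_self_eq_norm_sq, ← eCLM_sym_inner B hBsym (φ B v) v,
        eCLM_mul, hBB]
    have hHv : ⟪φ H v, v⟫ ≤ cH * ‖v‖ ^ 2 := by
      calc ⟪φ H v, v⟫ ≤ ‖φ H v‖ * ‖v‖ := real_inner_le_norm _ _
        _ ≤ (cH * ‖v‖) * ‖v‖ := by
            apply mul_le_mul_of_nonneg_right ((φ H).le_opNorm v) (norm_nonneg v)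
        _ = cH * ‖v‖ ^ 2 := by ring
    rw [hwn, hKw]
    exact hHv
  -- Lyapunov identity transported by H⁻¹
  have hAH : A * H + H * Aᵀ = (-2 : ℝ) • (1 : Matrix (Fin n) (Fin n) ℝ) := by
    have := eq_neg_of_add_eq_zero_left hLyap
    rw [this, neg_smul]
  have hL2 : H⁻¹ * A + Aᵀ * H⁻¹ = (-2 : ℝ) • (H⁻¹ * H⁻¹) := by
    calc H⁻¹ * A + Aᵀ * H⁻¹
        = H⁻¹ * A * (H * H⁻¹) + (H⁻¹ * H) * (Aᵀ * H⁻¹) := by rw [h1, h2, mul_one, one_mul]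
      _ = H⁻¹ * (A * H + H * Aᵀ) * H⁻¹ := by noncomm_ring
      _ = H⁻¹ * ((-2 : ℝ) • (1 : Matrix (Fin n) (Fin n) ℝ)) * H⁻¹ := by rw [hAH]
      _ = (-2 : ℝ) • (H⁻¹ * H⁻¹) := by
          rw [Matrix.mul_smul, Matrix.smul_mul, mul_one]
  -- main pointwise bound
  have main : ∀ x : EuclideanSpace ℝ (Fin n),
      ‖NormedSpace.exp (t • T) x‖ ^ 2
        ≤ (cH * cK * Real.exp (-2 * t / cH)) * ‖x‖ ^ 2 := by
    intro x
    set y : ℝ → EuclideanSpace ℝ (Fin n) := fun s => NormedSpace.exp (s • T) x with hy0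
    set f : ℝ → ℝ := fun s => ⟪K (y s), y s⟫ with hf0
    have hy : ∀ s, HasDerivAt y (T (y s)) s := by
      intro s
      have h := (hasDerivAt_exp_smul_const' T s).clm_apply (hasDerivAt_const s x)
      simpa [hy0, ContinuousLinearMap.mul_apply] using h
    have hf : ∀ s, HasDerivAt f (-2 * ‖K (y s)‖ ^ 2) s := by
      intro s
      have hKy : HasDerivAt (fun s => K (y s)) (K (T (y s))) s := by
        simpa using (hasDerivAt_const s K).clm_apply (hy s)
      have h := hKy.inner ℝ (hy s)
      have heq : ⟪K (y s), T (y s)⟫ + ⟪K (T (y s)), y s⟫ = -2 * ‖K (y s)‖ ^ 2 := by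
        have e1 : ⟪K (y s), T (y s)⟫ = ⟪φ (Aᵀ * H⁻¹) (y s), y s⟫ := by
          rw [← eCLM_mul, ← eCLM_transpose_inner A (K (y s)) (y s)]
        have e2 : ⟪K (T (y s)), y s⟫ = ⟪φ (H⁻¹ * A) (y s), y s⟫ := by
          rw [hK, hT, eCLM_mul]
        rw [e1, e2, ← inner_add_left, ← ContinuousLinearMap.add_apply, ← map_add,
          add_comm (Aᵀ * H⁻¹), hL2, _root_.map_smul, ContinuousLinearMap.smul_apply,
          real_inner_smul_left, ← eCLM_mul, eCLM_sym_inner H⁻¹ hHisym,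
          ← real_inner_self_eq_norm_sq]
      exact heq ▸ h
    have hfle : ∀ s, f s ≤ cH * ‖K (y s)‖ ^ 2 := by
      intro s
      have hys : φ H (K (y s)) = y s := by
        rw [hK, eCLM_mul, h1, _root_.map_one, ContinuousLinearMap.one_apply]
      calc f s = ⟪K (y s), φ H (K (y s))⟫ := by rw [hys]
        _ ≤ ‖K (y s)‖ * ‖φ H (K (y s))‖ := real_inner_le_norm _ _
        _ ≤ ‖K (y s)‖ * (cH * ‖K (y s)‖) := by
            apply mul_le_mul_of_nonneg_left ((φ H).le_opNorm _) (norm_nonneg _)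
        _ = cH * ‖K (y s)‖ ^ 2 := by ring
    set g : ℝ → ℝ := fun s => f s * Real.exp (2 * s / cH) with hg0
    have hg : ∀ s, HasDerivAt g
        (-2 * ‖K (y s)‖ ^ 2 * Real.exp (2 * s / cH)
          + f s * (Real.exp (2 * s / cH) * (2 / cH))) s := by
      intro s
      have h1' : HasDerivAt (fun s : ℝ => 2 * s / cH) (2 / cH) s := by
        simpa using ((hasDerivAt_id s).const_mul (2 : ℝ)).div_const cH
      exact (hf s).mul h1'.exp
    have hganti : Antitone g := by
      apply antitone_of_deriv_nonpos (fun s => (hg s).differentiableAt)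
      intro s
      rw [(hg s).deriv]
      have hfs := hfle s
      have he : (0 : ℝ) < Real.exp (2 * s / cH) := Real.exp_pos _
      have h2' : f s * (Real.exp (2 * s / cH) * (2 / cH))
          ≤ (cH * ‖K (y s)‖ ^ 2) * (Real.exp (2 * s / cH) * (2 / cH)) := by
        apply mul_le_mul_of_nonneg_right hfs
        positivity
      have h3' : (cH * ‖K (y s)‖ ^ 2) * (Real.exp (2 * s / cH) * (2 / cH))
          = 2 * ‖K (y s)‖ ^ 2 * Real.exp (2 * s / cH) := by
        field_simp
      nlinarith
    have hft : f t ≤ f 0 * Real.exp (-2 * t / cH) := by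
      have hgle : f t * Real.exp (2 * t / cH) ≤ f 0 := by
        have := hganti ht
        simpa [hg0] using this
      have he : (0 : ℝ) < Real.exp (2 * t / cH) := Real.exp_pos _
      have : -2 * t / cH = -(2 * t / cH) := by ring
      rw [this, Real.exp_neg, ← div_eq_mul_inv, le_div_iff₀ he]
      exact hgle
    have hf0le : f 0 ≤ cK * ‖x‖ ^ 2 := by
      have hy0' : y 0 = x := by
        show (NormedSpace.exp ((0:ℝ) • T)) x = x
        have hz : (0:ℝ) • T = 0 := zero_smul ℝ T
        rw [hz, NormedSpace.exp_zero, ContinuousLinearMap.one_apply]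
      calc f 0 = ⟪K x, x⟫ := by show ⟪K (y 0), y 0⟫ = ⟪K x, x⟫; rw [hy0']
        _ ≤ ‖K x‖ * ‖x‖ := real_inner_le_norm _ _
        _ ≤ (cK * ‖x‖) * ‖x‖ := mul_le_mul_of_nonneg_right (K.le_opNorm x) (norm_nonneg _)
        _ = cK * ‖x‖ ^ 2 := by ring
    have hkey := key (y t)
    have hexp : (0 : ℝ) < Real.exp (-2 * t / cH) := Real.exp_pos _
    calc ‖NormedSpace.exp (t • T) x‖ ^ 2 = ‖y t‖ ^ 2 := rfl
      _ ≤ cH * f t := hkey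
      _ ≤ cH * (f 0 * Real.exp (-2 * t / cH)) := by
          apply mul_le_mul_of_nonneg_left hft hc.le
      _ ≤ cH * ((cK * ‖x‖ ^ 2) * Real.exp (-2 * t / cH)) := by
          apply mul_le_mul_of_nonneg_left _ hc.le
          exact mul_le_mul_of_nonneg_right hf0le hexp.le
      _ = (cH * cK * Real.exp (-2 * t / cH)) * ‖x‖ ^ 2 := by ring
  -- from pointwise bound to operator norm
  set R : ℝ := cH * cK * Real.exp (-2 * t / cH) with hR0
  have hR : 0 ≤ R := by
    have : (0 : ℝ) ≤ cK := norm_nonneg _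
    positivity
  have hbound : ∀ x : EuclideanSpace ℝ (Fin n),
      ‖NormedSpace.exp (t • T) x‖ ≤ Real.sqrt R * ‖x‖ := by
    intro x
    have h := main x
    calc ‖NormedSpace.exp (t • T) x‖
        = Real.sqrt (‖NormedSpace.exp (t • T) x‖ ^ 2) := by
          rw [Real.sqrt_sq (norm_nonneg _)]
      _ ≤ Real.sqrt (R * ‖x‖ ^ 2) := Real.sqrt_le_sqrt h
      _ = Real.sqrt R * ‖x‖ := by
          rw [Real.sqrt_mul hR, Real.sqrt_sq (norm_nonneg _)]
  have hop : ‖NormedSpace.exp (t • T)‖ ≤ Real.sqrt R :=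
    ContinuousLinearMap.opNorm_le_bound _ (Real.sqrt_nonneg _) hbound
  have hspec : specNorm (NormedSpace.exp (t • A)) = ‖NormedSpace.exp (t • T)‖ := by
    rw [specNorm, eCLM_exp, _root_.map_smul]
  have hsH : specNorm H = cH := by rw [hcH, hφ]; rfl
  have hsK : specNorm H⁻¹ = cK := by rw [hcK, hK, hφ]; rfl
  rw [hspec, hsH, hsK, ← hR0]
  calc ‖NormedSpace.exp (t • T)‖ ^ 2 ≤ Real.sqrt R ^ 2 :=
        pow_le_pow_left₀ (norm_nonneg _) hop 2
    _ = R := Real.sq_sqrt hR
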